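/- Let S be a subset of {1,…,h} × {1,…,w} such that (1,1) ∈ S, S is closed under moving up and left (i.e., (i+1,j) ∈ S implies (i,j) ∈ S, and (i,j+1) ∈ S implies (i,j) ∈ S), and S satisfies the corner condition: if (i+1,j) ∈ S and (i,j+1) ∈ S then (i+1,j+1) ∈ S. Then S = {1,…,a} × {1,…,b} for some 1 ≤ a ≤ h and 1 ≤ b ≤ w. -/
import Mathlib


/-- a subset of the grid containing the top-left cell, closed under
moving up and left, and satisfying the corner condition is a full axis-aligned
rectangle anchored at the top-left corner. -/
theorem stmt_4 {h w : ℕ} (hh : 0 < h) (hw : 0 < w)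
    (S : Set (Fin h × Fin w))
    (h0 : (⟨⟨0, hh⟩, ⟨0, hw⟩⟩ : Fin h × Fin w) ∈ S)
    (hup : ∀ (i : Fin h) (j : Fin w) (hi : i.val + 1 < h),
      (⟨⟨i.val + 1, hi⟩, j⟩ : Fin h × Fin w) ∈ S → (⟨i, j⟩ : Fin h × Fin w) ∈ S)
    (hleft : ∀ (i : Fin h) (j : Fin w) (hj : j.val + 1 < w),
      (⟨i, ⟨j.val + 1, hj⟩⟩ : Fin h × Fin w) ∈ S → (⟨i, j⟩ : Fin h × Fin w) ∈ S)
    (hcorner : ∀ (i : Fin h) (j : Fin w) (hi : i.val + 1 < h) (hj : j.val + 1 < w),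
      (⟨⟨i.val + 1, hi⟩, j⟩ : Fin h × Fin w) ∈ S →
      (⟨i, ⟨j.val + 1, hj⟩⟩ : Fin h × Fin w) ∈ S →
      (⟨⟨i.val + 1, hi⟩, ⟨j.val + 1, hj⟩⟩ : Fin h × Fin w) ∈ S) :
    ∃ a b : ℕ, 1 ≤ a ∧ a ≤ h ∧ 1 ≤ b ∧ b ≤ w ∧
      ∀ p : Fin h × Fin w, p ∈ S ↔ (p.1.val < a ∧ p.2.val < b) := by
  classical
  set T : ℕ → ℕ → Prop := fun i j => ∃ (hi : i < h) (hj : j < w),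
    (⟨⟨i, hi⟩, ⟨j, hj⟩⟩ : Fin h × Fin w) ∈ S with hTdef
  have Tup : ∀ i j, T (i + 1) j → T i j := by
    rintro i j ⟨hi, hj, hm⟩
    exact ⟨Nat.lt_of_succ_lt hi, hj, hup ⟨i, Nat.lt_of_succ_lt hi⟩ ⟨j, hj⟩ hi hm⟩
  have Tleft : ∀ i j, T i (j + 1) → T i j := by
    rintro i j ⟨hi, hj, hm⟩
    exact ⟨hi, Nat.lt_of_succ_lt hj, hleft ⟨i, hi⟩ ⟨j, Nat.lt_of_succ_lt hj⟩ hj hm⟩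
  have Tcorner : ∀ i j, T (i + 1) j → T i (j + 1) → T (i + 1) (j + 1) := by
    rintro i j ⟨hi, hj, hm1⟩ ⟨hi', hj', hm2⟩
    exact ⟨hi, hj', hcorner ⟨i, hi'⟩ ⟨j, hj⟩ hi hj' hm1 hm2⟩
  have Tdown : ∀ k i j, T (i + k) j → T i j := by
    intro k
    induction k with
    | zero => intro i j hx; exact hx
    | succ k ih =>
      intro i j hx
      exact ih i j (Tup (i + k) j (by rwa [Nat.add_succ] at hx))
  have Tright : ∀ k i j, T i (j + k) → T i j := by
    intro k
    induction k with
    | zero => intro i j hx; exact hx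
    | succ k ih =>
      intro i j hx
      exact ih i j (Tleft i (j + k) (by rwa [Nat.add_succ] at hx))
  have key : ∀ i j, T i 0 → T 0 j → T i j := by
    intro i
    induction i with
    | zero => intro j _ hj; exact hj
    | succ i ih =>
      intro j
      induction j with
      | zero => intro h1 _; exact h1
      | succ j ihj =>
        intro h1 h2
        exact Tcorner i j (ihj h1 (Tleft 0 j h2)) (ih (j + 1) (Tup i 0 h1) h2)
  have T00 : T 0 0 := ⟨hh, hw, h0⟩
  have hAne : ∃ n, ¬ T n 0 := ⟨h, fun ⟨hi, _, _⟩ => absurd hi (lt_irrefl h)⟩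
  have hBne : ∃ n, ¬ T 0 n := ⟨w, fun ⟨_, hj, _⟩ => absurd hj (lt_irrefl w)⟩
  set a := Nat.find hAne with ha
  set b := Nat.find hBne with hb
  have ha1 : 1 ≤ a := (Nat.find_pos hAne).mpr (not_not.mpr T00)
  have hb1 : 1 ≤ b := (Nat.find_pos hBne).mpr (not_not.mpr T00)
  have hah : a ≤ h := Nat.find_le (fun ⟨hi, _, _⟩ => absurd hi (lt_irrefl h))
  have hbw : b ≤ w := Nat.find_le (fun ⟨_, hj, _⟩ => absurd hj (lt_irrefl w))
  refine ⟨a, b, ha1, hah, hb1, hbw, ?_⟩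
  rintro ⟨⟨i, hi⟩, ⟨j, hj⟩⟩
  constructor
  · intro hmem
    have hT : T i j := ⟨hi, hj, hmem⟩
    have hT1 : T i 0 := Tright j i 0 (by simpa using hT)
    have hT2 : T 0 j := Tdown i 0 j (by simpa using hT)
    constructor
    · by_contra hc
      push_neg at hc
      obtain ⟨k, hk⟩ := Nat.le.dest hc
      exact Nat.find_spec hAne (Tdown k a 0 (by rwa [hk]))
    · by_contra hc
      push_neg at hc
      obtain ⟨k, hk⟩ := Nat.le.dest hc
      exact Nat.find_spec hBne (Tright k 0 b (by rwa [hk]))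
  · rintro ⟨hia, hjb⟩
    have hT1 : T i 0 := not_not.mp (fun hn => absurd hia (not_lt.mpr (Nat.find_le hn)))
    have hT2 : T 0 j := not_not.mp (fun hn => absurd hjb (not_lt.mpr (Nat.find_le hn)))
    obtain ⟨hi', hj', hm⟩ := key i j hT1 hT2
    exact hm
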